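/- arXiv:2304.12564 — 2 statements merged into one kernel-verified Lean document; each statement's English description precedes it below -/
import Mathlib

section
/- Fix $\alpha \in (0,2)$ and $M > 0$. Let $(\Gamma_j)_{j\geq 0}$ be the arrival times of a unit-rate Poisson process on $(0,\infty)$ (so $\Gamma_j \sim \mathrm{Gamma}(j+1,1)$ and the $\Gamma_j$ are partial sums of i.i.d. Exp(1) variables), and set $\Gamma_j^M = \max(\Gamma_j, M^{-\alpha})$. Then $\sum_{j=0}^\infty \mathbf{E}[(\Gamma_j^M)^{-2/\alpha}] = \frac{2}{2-\alpha}M^{2-\alpha}$. -/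
open MeasureTheory ProbabilityTheory

open Real Set in
/-- If `Γ_j ~ Gamma(j+1, 1)` (the arrival times of a unit-rate Poisson process, i.e.
partial sums of i.i.d. Exp(1) variables) and `Γ_j^M = max(Γ_j, M^{-α})`, then
`∑_j E[(Γ_j^M)^{-2/α}] = (2/(2-α)) M^{2-α}`. -/
theorem sum_expectation_truncated_gamma
    {Ω : Type*} [MeasurableSpace Ω] (P : Measure Ω) [IsProbabilityMeasure P]
    (α : ℝ) (hα : 0 < α) (hα2 : α < 2) (M : ℝ) (hM : 0 < M)
    (Γ : ℕ → Ω → ℝ) (hΓmeas : ∀ j, Measurable (Γ j))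
    (hΓ : ∀ j : ℕ, Measure.map (Γ j) P = gammaMeasure (j + 1) 1) :
    ∑' j : ℕ, ∫ ω, (max (Γ j ω) (M ^ (-α))) ^ (-(2 / α)) ∂P =
      2 / (2 - α) * M ^ (2 - α) := by
  have h2α : (0:ℝ) < 2 - α := by linarith
  set c : ℝ := M ^ (-α) with hc_def
  have hc : 0 < c := Real.rpow_pos_of_pos hM _
  set f : ℝ → ℝ := fun x => (max x c) ^ (-(2 / α)) with hf_def
  have hfcont : Continuous f :=
    (continuous_id.max continuous_const).rpow_const
      (fun x => Or.inl (lt_of_lt_of_le hc (le_max_right x c)).ne')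
  have hfmeas : Measurable f := hfcont.measurable
  have hfnn : ∀ x, 0 ≤ f x := fun x =>
    Real.rpow_nonneg (le_trans hc.le (le_max_right _ _)) _
  have hfle : ∀ x, f x ≤ c ^ (-(2 / α)) := fun x =>
    Real.rpow_le_rpow_of_nonpos hc (le_max_right _ _)
      (neg_nonpos.mpr (by positivity))
  -- notation for the key lintegrals
  set g : ℕ → ENNReal := fun j => ∫⁻ x, ENNReal.ofReal (f x) ∂(gammaMeasure (j + 1) 1)
    with hg_def
  -- Step A : each expectation equals (g j).toReal
  have hA : ∀ j : ℕ, ∫ ω, f (Γ j ω) ∂P = (g j).toReal := by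
    intro j
    rw [← integral_map (hΓmeas j).aemeasurable hfmeas.aestronglyMeasurable, hΓ j,
      integral_eq_lintegral_of_nonneg_ae (ae_of_all _ hfnn)
        hfmeas.aestronglyMeasurable]
  -- each g j is finite
  have hgle : ∀ j, g j ≤ ENNReal.ofReal (c ^ (-(2 / α))) := by
    intro j
    haveI : IsProbabilityMeasure (gammaMeasure ((j:ℝ) + 1) 1) :=
      isProbabilityMeasure_gammaMeasure (by positivity) one_pos
    calc g j ≤ ∫⁻ _, ENNReal.ofReal (c ^ (-(2 / α))) ∂(gammaMeasure ((j:ℝ) + 1) 1) :=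
          lintegral_mono fun x => ENNReal.ofReal_le_ofReal (hfle x)
      _ = ENNReal.ofReal (c ^ (-(2 / α))) := by
          rw [lintegral_const, measure_univ, mul_one]
  have hgfin : ∀ j, g j ≠ ⊤ := fun j =>
    ne_top_of_le_ne_top ENNReal.ofReal_ne_top (hgle j)
  -- rewrite sum of expectations
  have hstep : (∑' j : ℕ, ∫ ω, f (Γ j ω) ∂P) = (∑' j : ℕ, g j).toReal := by
    rw [ENNReal.tsum_toReal_eq hgfin]
    exact tsum_congr hA
  -- Step C : compute the ENNReal sum
  have hpdfmeas : ∀ a r : ℝ, Measurable (gammaPDF a r) := fun a r =>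
    (measurable_gammaPDFReal a r).ennreal_ofReal
  have h1 : ∀ j : ℕ, g j = ∫⁻ x, gammaPDF ((j:ℝ) + 1) 1 x * ENNReal.ofReal (f x) := by
    intro j
    show ∫⁻ x, ENNReal.ofReal (f x)
        ∂((volume : Measure ℝ).withDensity (gammaPDF ((j:ℝ) + 1) 1)) = _
    rw [lintegral_withDensity_eq_lintegral_mul _ (hpdfmeas _ _)
        hfmeas.ennreal_ofReal]
    rfl
  -- pointwise sum of the densities
  have hS : ∀ x : ℝ, (∑' j : ℕ, gammaPDF ((j:ℝ) + 1) 1 x) =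
      (Ici (0:ℝ)).indicator (fun _ => (1:ENNReal)) x := by
    intro x
    rcases lt_or_ge x 0 with hx | hx
    · rw [indicator_of_notMem (by simpa using not_le.mpr hx)]
      simp [gammaPDF_of_neg hx]
    · rw [indicator_of_mem (by simpa using hx)]
      have hpdf : ∀ j : ℕ, gammaPDF ((j:ℝ) + 1) 1 x =
          ENNReal.ofReal (x ^ j / (j.factorial : ℝ) * Real.exp (-x)) := by
        intro j
        rw [gammaPDF_of_nonneg hx]
        congr 1
        rw [Real.one_rpow, Real.Gamma_nat_eq_factorial, add_sub_cancel_right,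
          Real.rpow_natCast, one_mul]
        ring
      simp_rw [hpdf]
      have hsumm : Summable (fun j : ℕ => x ^ j / (j.factorial : ℝ) * Real.exp (-x)) :=
        (Real.summable_pow_div_factorial x).mul_right _
      have hnn : ∀ j : ℕ, 0 ≤ x ^ j / (j.factorial : ℝ) * Real.exp (-x) :=
        fun j => by positivity
      rw [← ENNReal.ofReal_tsum_of_nonneg hnn hsumm, tsum_mul_right]
      have hexpx : (∑' j : ℕ, x ^ j / (j.factorial : ℝ)) = Real.exp x := by
        rw [Real.exp_eq_exp_ℝ, NormedSpace.exp_eq_tsum_div]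
      rw [hexpx, ← Real.exp_add, add_neg_cancel, Real.exp_zero, ENNReal.ofReal_one]
  have hsum : (∑' j : ℕ, g j) = ∫⁻ x in Ici (0:ℝ), ENNReal.ofReal (f x) := by
    simp_rw [h1]
    rw [← lintegral_tsum (f := fun (j : ℕ) x => gammaPDF ((j:ℝ) + 1) 1 x * ENNReal.ofReal (f x)) (fun j =>
      ((hpdfmeas _ _).mul hfmeas.ennreal_ofReal).aemeasurable)]
    rw [← lintegral_indicator measurableSet_Ici]
    refine lintegral_congr fun x => ?_
    rw [ENNReal.tsum_mul_right, hS x]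
    rcases lt_or_ge x 0 with hx | hx
    · rw [indicator_of_notMem (by simpa using not_le.mpr hx),
        indicator_of_notMem (by simpa using not_le.mpr hx), zero_mul]
    · rw [indicator_of_mem (by simpa using hx), indicator_of_mem (by simpa using hx),
        one_mul]
  -- the exponent is < -1
  have hexp : -(2 / α) < -1 := by
    rw [neg_lt_neg_iff]
    exact (one_lt_div hα).mpr hα2
  -- integrability pieces
  have hIoc : IntegrableOn f (Ioc 0 c) volume := by
    have hconst : IntegrableOn (fun _ : ℝ => c ^ (-(2 / α))) (Ioc 0 c) volume :=
      integrableOn_const measure_Ioc_lt_top.ne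
    exact hconst.congr_fun
      (fun x hx => by simp only [hf_def]; rw [max_eq_right hx.2])
      measurableSet_Ioc
  have hIoi : IntegrableOn f (Ioi c) volume :=
    (integrableOn_Ioi_rpow_of_lt hexp hc).congr_fun
      (fun x hx => by simp only [hf_def]; rw [max_eq_left (le_of_lt hx)])
      measurableSet_Ioi
  have hint : IntegrableOn f (Ioi 0) volume := by
    rw [← Ioc_union_Ioi_eq_Ioi hc.le]
    exact hIoc.union hIoi
  -- value of the two pieces
  have hαne : α ≠ 0 := hα.ne'
  have hval1 : (∫ x in Ioc (0:ℝ) c, f x) = M ^ (2 - α) := by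
    have heq : EqOn f (fun _ => c ^ (-(2 / α))) (Ioc 0 c) := fun x hx => by
      simp only [hf_def]; rw [max_eq_right hx.2]
    rw [setIntegral_congr_fun measurableSet_Ioc heq]
    rw [setIntegral_const, Real.volume_real_Ioc_of_le hc.le, sub_zero, smul_eq_mul]
    rw [hc_def, ← Real.rpow_mul hM.le, ← Real.rpow_add hM]
    congr 1
    field_simp
    ring
  have hval2 : (∫ x in Ioi c, f x) = α / (2 - α) * M ^ (2 - α) := by
    have heq : EqOn f (fun x : ℝ => x ^ (-(2 / α))) (Ioi c) := fun x hx => by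
      simp only [hf_def]; rw [max_eq_left (le_of_lt hx)]
    rw [setIntegral_congr_fun measurableSet_Ioi heq]
    rw [integral_Ioi_rpow_of_lt hexp hc]
    have hcpow : c ^ (-(2 / α) + 1) = M ^ (2 - α) := by
      rw [hc_def, ← Real.rpow_mul hM.le]
      congr 1
      field_simp
      ring
    rw [hcpow]
    rw [div_eq_iff (by
      intro h
      have : (2:ℝ) / α = 1 := by linarith
      rw [div_eq_one_iff_eq hαne] at this
      linarith)]
    field_simp
    ring
  have hIoival : (∫ x in Ioi (0:ℝ), f x) = 2 / (2 - α) * M ^ (2 - α) := by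
    rw [← Ioc_union_Ioi_eq_Ioi hc.le,
      setIntegral_union (Ioc_disjoint_Ioi le_rfl) measurableSet_Ioi hIoc hIoi,
      hval1, hval2]
    field_simp
    ring
  -- put everything together
  have hlin : (∫⁻ x in Ici (0:ℝ), ENNReal.ofReal (f x)) =
      ENNReal.ofReal (2 / (2 - α) * M ^ (2 - α)) := by
    rw [← Measure.restrict_congr_set Ioi_ae_eq_Ici,
      ← ofReal_integral_eq_lintegral_ofReal hint
        (ae_of_all _ fun x => hfnn x), hIoival]
  calc (∑' j : ℕ, ∫ ω, f (Γ j ω) ∂P) = (∑' j : ℕ, g j).toReal := hstep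
    _ = (ENNReal.ofReal (2 / (2 - α) * M ^ (2 - α))).toReal := by rw [hsum, hlin]
    _ = 2 / (2 - α) * M ^ (2 - α) := ENNReal.toReal_ofReal (by positivity)
end

section
/- Let $T_N$ be a symmetric $N \times N$ matrix and $G_{2N}$ a symmetric $2N\times 2N$ matrix such that $T_N$ is the top-left $N\times N$ principal submatrix of $G_{2N}$. Let $f : [0,\infty) \to [0,\infty)$ be bounded and non-decreasing. Then $\int f(|t|)\,d\mu_{T_N}(t) \leq 2\int f(|t|)\,d\mu_{G_{2N}}(t)$, where $\mu_A$ denotes the empirical spectral distribution of $A$. -/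
open MeasureTheory Matrix

/-- The empirical spectral distribution of a symmetric matrix: the uniform probability
measure on its eigenvalues, counted with multiplicity. -/
noncomputable def esd {n : ℕ} {A : Matrix (Fin n) (Fin n) ℝ}
    (hA : A.IsHermitian) : Measure ℝ :=
  (n : ENNReal)⁻¹ • ∑ i, Measure.dirac (hA.eigenvalues i)

namespace EsdBound

open Finset

section spectral

variable {n : ℕ} {A : Matrix (Fin n) (Fin n) ℝ} (hA : A.IsHermitian)

local notation "⟪" x ", " y "⟫" => @inner ℝ (EuclideanSpace ℝ (Fin n)) _ x y

/-- Coefficients of a vector in the eigenvector basis. -/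
noncomputable def coe' (x : EuclideanSpace ℝ (Fin n)) (i : Fin n) : ℝ :=
  ⟪hA.eigenvectorBasis i, x⟫

lemma sum_repr (x : EuclideanSpace ℝ (Fin n)) :
    ∑ i, coe' hA x i • hA.eigenvectorBasis i = x :=
  hA.eigenvectorBasis.sum_repr' x

lemma inner_eq_sum (x y : EuclideanSpace ℝ (Fin n)) :
    ⟪x, y⟫ = ∑ i, coe' hA x i * coe' hA y i := by
  rw [← (hA.eigenvectorBasis.repr.inner_map_map x y)]
  rw [PiLp.inner_apply]
  congr 1; ext i
  simp [coe', hA.eigenvectorBasis.repr_apply_apply]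
  ring

lemma inner_self_eq (x : EuclideanSpace ℝ (Fin n)) :
    ⟪x, x⟫ = ∑ i, (coe' hA x i)^2 := by
  rw [inner_eq_sum hA]; simp [sq]

lemma norm_sq_eq (x : EuclideanSpace ℝ (Fin n)) :
    ‖x‖^2 = ∑ i, (coe' hA x i)^2 := by
  rw [← real_inner_self_eq_norm_sq, inner_self_eq hA]

lemma coe'_mulVec (x : EuclideanSpace ℝ (Fin n)) (i : Fin n) :
    coe' hA (WithLp.toLp 2 (A *ᵥ x)) i = hA.eigenvalues i * coe' hA x i := by
  unfold coe'
  have h1 : ⟪WithLp.toLp 2 (A *ᵥ hA.eigenvectorBasis i), x⟫ = ⟪hA.eigenvectorBasis i, WithLp.toLp 2 (A *ᵥ x)⟫ := by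
    simp only [PiLp.inner_apply, PiLp.toLp_apply, RCLike.inner_apply, conj_trivial, mulVec, dotProduct]
    simp_rw [Finset.sum_mul, Finset.mul_sum]
    rw [Finset.sum_comm]
    apply Finset.sum_congr rfl; intro j _
    apply Finset.sum_congr rfl; intro k _
    have hsym : A j k = A k j := by
      have := congrFun (congrFun hA k) j
      simpa [Matrix.conjTranspose_apply] using this
    rw [hsym]; ring
  have h2 : WithLp.toLp 2 (A *ᵥ (hA.eigenvectorBasis i : Fin n → ℝ))
      = (hA.eigenvalues i • hA.eigenvectorBasis i : EuclideanSpace ℝ (Fin n)) := by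
    rw [hA.mulVec_eigenvectorBasis i]; rfl
  rw [← h1, h2, real_inner_smul_left]

lemma inner_mulVec_eq (x : EuclideanSpace ℝ (Fin n)) :
    ⟪x, WithLp.toLp 2 (A *ᵥ x)⟫ = ∑ i, hA.eigenvalues i * (coe' hA x i)^2 := by
  rw [inner_eq_sum hA]
  congr 1; ext i
  rw [coe'_mulVec hA]; ring

lemma coe'_eq_zero (S : Finset (Fin n)) {y : EuclideanSpace ℝ (Fin n)}
    (hy : y ∈ Submodule.span ℝ (hA.eigenvectorBasis '' ↑S)) {j : Fin n} (hj : j ∉ S) :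
    coe' hA y j = 0 := by
  induction hy using Submodule.span_induction with
  | mem x hx =>
    obtain ⟨i, hi, rfl⟩ := hx
    have hne : j ≠ i := by rintro rfl; exact hj hi
    exact hA.eigenvectorBasis.orthonormal.2 hne
  | zero => unfold coe'; exact inner_zero_right _
  | add x y _ _ hx hy => unfold coe' at *; rw [inner_add_right, hx, hy, add_zero]
  | smul c x _ hx => unfold coe' at *; rw [inner_smul_right, hx, mul_zero]

lemma finrank_span_eigen (S : Finset (Fin n)) :
    Module.finrank ℝ (Submodule.span ℝ (hA.eigenvectorBasis '' ↑S)) = S.card := by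
  have hon : Orthonormal ℝ (fun i : {i // i ∈ S} => hA.eigenvectorBasis i) :=
    hA.eigenvectorBasis.orthonormal.comp _ Subtype.val_injective
  have hli := hon.linearIndependent
  have hrange : Set.range (fun i : {i // i ∈ S} => hA.eigenvectorBasis i)
      = hA.eigenvectorBasis '' ↑S := by
    ext x; simp
  rw [← hrange, finrank_span_eq_card hli, Fintype.card_coe]

lemma quad_gt (c : ℝ) {y : EuclideanSpace ℝ (Fin n)}
    (hy : y ∈ Submodule.span ℝ
      (hA.eigenvectorBasis '' ↑(Finset.univ.filter (fun i => c < hA.eigenvalues i))))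
    (hy0 : y ≠ 0) :
    c * ‖y‖^2 < ⟪y, WithLp.toLp 2 (A *ᵥ y)⟫ := by
  rw [← sub_pos, inner_mulVec_eq hA, norm_sq_eq hA, Finset.mul_sum, ← Finset.sum_sub_distrib]
  have hz : ∀ j ∉ Finset.univ.filter (fun i => c < hA.eigenvalues i), coe' hA y j = 0 :=
    fun j hj => coe'_eq_zero hA _ hy hj
  have hex : ∃ i, coe' hA y i ≠ 0 := by
    by_contra h
    push_neg at h
    apply hy0
    have h2 : ‖y‖^2 = 0 := by rw [norm_sq_eq hA]; simp [h]
    have : ‖y‖ = 0 := by nlinarith [norm_nonneg y]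
    rwa [norm_eq_zero] at this
  obtain ⟨i, hi⟩ := hex
  have hiP : i ∈ Finset.univ.filter (fun i => c < hA.eigenvalues i) := by
    by_contra h; exact hi (hz i h)
  apply Finset.sum_pos'
  · intro j _
    by_cases hj : j ∈ Finset.univ.filter (fun i => c < hA.eigenvalues i)
    · have := (Finset.mem_filter.mp hj).2
      nlinarith [sq_nonneg (coe' hA y j)]
    · rw [hz j hj]; ring_nf; simp
  · refine ⟨i, Finset.mem_univ i, ?_⟩
    have := (Finset.mem_filter.mp hiP).2
    have h2 : 0 < (coe' hA y i)^2 := by positivity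
    nlinarith

lemma quad_lt (c : ℝ) {y : EuclideanSpace ℝ (Fin n)}
    (hy : y ∈ Submodule.span ℝ
      (hA.eigenvectorBasis '' ↑(Finset.univ.filter (fun i => hA.eigenvalues i < c))))
    (hy0 : y ≠ 0) :
    ⟪y, WithLp.toLp 2 (A *ᵥ y)⟫ < c * ‖y‖^2 := by
  rw [← sub_pos, inner_mulVec_eq hA, norm_sq_eq hA, Finset.mul_sum, ← Finset.sum_sub_distrib]
  have hz : ∀ j ∉ Finset.univ.filter (fun i => hA.eigenvalues i < c), coe' hA y j = 0 :=
    fun j hj => coe'_eq_zero hA _ hy hj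
  have hex : ∃ i, coe' hA y i ≠ 0 := by
    by_contra h
    push_neg at h
    apply hy0
    have h2 : ‖y‖^2 = 0 := by rw [norm_sq_eq hA]; simp [h]
    have : ‖y‖ = 0 := by nlinarith [norm_nonneg y]
    rwa [norm_eq_zero] at this
  obtain ⟨i, hi⟩ := hex
  have hiP : i ∈ Finset.univ.filter (fun i => hA.eigenvalues i < c) := by
    by_contra h; exact hi (hz i h)
  apply Finset.sum_pos'
  · intro j _
    by_cases hj : j ∈ Finset.univ.filter (fun i => hA.eigenvalues i < c)
    · have := (Finset.mem_filter.mp hj).2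
      nlinarith [sq_nonneg (coe' hA y j)]
    · rw [hz j hj]; ring_nf; simp
  · refine ⟨i, Finset.mem_univ i, ?_⟩
    have := (Finset.mem_filter.mp hiP).2
    have h2 : 0 < (coe' hA y i)^2 := by positivity
    nlinarith

lemma count_ge_of_quad_gt (c : ℝ) (W : Submodule ℝ (EuclideanSpace ℝ (Fin n)))
    (hW : ∀ x ∈ W, x ≠ 0 → c * ‖x‖^2 < ⟪x, WithLp.toLp 2 (A *ᵥ x)⟫) :
    Module.finrank ℝ W ≤ (Finset.univ.filter (fun i => c < hA.eigenvalues i)).card := by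
  set S := Finset.univ.filter (fun i => ¬ c < hA.eigenvalues i) with hS
  set V := Submodule.span ℝ (hA.eigenvectorBasis '' ↑S) with hV
  have hquadV : ∀ x ∈ V, ⟪x, WithLp.toLp 2 (A *ᵥ x)⟫ ≤ c * ‖x‖^2 := by
    intro x hx
    rw [inner_mulVec_eq hA, norm_sq_eq hA, Finset.mul_sum]
    apply Finset.sum_le_sum
    intro i _
    by_cases hi : i ∈ S
    · have : ¬ c < hA.eigenvalues i := (Finset.mem_filter.mp hi).2
      nlinarith [sq_nonneg (coe' hA x i)]
    · rw [coe'_eq_zero hA S hx hi]; ring_nf; simp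
  have hdisj : W ⊓ V = ⊥ := by
    rw [Submodule.eq_bot_iff]
    intro x hx
    by_contra hx0
    exact absurd (hquadV x hx.2) (not_le.mpr (hW x hx.1 hx0))
  have hsum := Submodule.finrank_sup_add_finrank_inf_eq W V
  rw [hdisj, finrank_bot, add_zero] at hsum
  have hle : Module.finrank ℝ ↥(W ⊔ V) ≤ n := by
    have := Submodule.finrank_le (W ⊔ V)
    rwa [finrank_euclideanSpace, Fintype.card_fin] at this
  have hVrank : Module.finrank ℝ V = S.card := finrank_span_eigen hA S
  have hcards := Finset.card_filter_add_card_filter_not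
    (s := (Finset.univ : Finset (Fin n))) (p := fun i => c < hA.eigenvalues i)
  rw [Finset.card_univ, Fintype.card_fin] at hcards
  have hSe : S.card = (Finset.univ.filter (fun a => ¬ c < hA.eigenvalues a)).card := rfl
  omega

lemma count_le_of_quad_lt (c : ℝ) (W : Submodule ℝ (EuclideanSpace ℝ (Fin n)))
    (hW : ∀ x ∈ W, x ≠ 0 → ⟪x, WithLp.toLp 2 (A *ᵥ x)⟫ < c * ‖x‖^2) :
    Module.finrank ℝ W ≤ (Finset.univ.filter (fun i => hA.eigenvalues i < c)).card := by
  set S := Finset.univ.filter (fun i => ¬ hA.eigenvalues i < c) with hS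
  set V := Submodule.span ℝ (hA.eigenvectorBasis '' ↑S) with hV
  have hquadV : ∀ x ∈ V, c * ‖x‖^2 ≤ ⟪x, WithLp.toLp 2 (A *ᵥ x)⟫ := by
    intro x hx
    rw [inner_mulVec_eq hA, norm_sq_eq hA, Finset.mul_sum]
    apply Finset.sum_le_sum
    intro i _
    by_cases hi : i ∈ S
    · have : ¬ hA.eigenvalues i < c := (Finset.mem_filter.mp hi).2
      nlinarith [sq_nonneg (coe' hA x i)]
    · rw [coe'_eq_zero hA S hx hi]; ring_nf; simp
  have hdisj : W ⊓ V = ⊥ := by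
    rw [Submodule.eq_bot_iff]
    intro x hx
    by_contra hx0
    exact absurd (hquadV x hx.2) (not_le.mpr (hW x hx.1 hx0))
  have hsum := Submodule.finrank_sup_add_finrank_inf_eq W V
  rw [hdisj, finrank_bot, add_zero] at hsum
  have hle : Module.finrank ℝ ↥(W ⊔ V) ≤ n := by
    have := Submodule.finrank_le (W ⊔ V)
    rwa [finrank_euclideanSpace, Fintype.card_fin] at this
  have hVrank : Module.finrank ℝ V = S.card := finrank_span_eigen hA S
  have hcards := Finset.card_filter_add_card_filter_not
    (s := (Finset.univ : Finset (Fin n))) (p := fun i => hA.eigenvalues i < c)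
  rw [Finset.card_univ, Fintype.card_fin] at hcards
  have hSe : S.card = (Finset.univ.filter (fun a => ¬ hA.eigenvalues a < c)).card := rfl
  omega

end spectral

lemma inner_euc {m : ℕ} (x y : EuclideanSpace ℝ (Fin m)) :
    @inner ℝ (EuclideanSpace ℝ (Fin m)) _ x y = ∑ i, x i * y i := by
  rw [PiLp.inner_apply]
  simp [RCLike.inner_apply, mul_comm]

section embedding
variable {N : ℕ}

noncomputable def Elin (N : ℕ) : EuclideanSpace ℝ (Fin N) →ₗ[ℝ] EuclideanSpace ℝ (Fin (2*N)) where
  toFun y := WithLp.toLp 2 (fun i => if h : (i : ℕ) < N then y ⟨i, h⟩ else 0)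
  map_add' y z := by ext i; by_cases h : (i : ℕ) < N <;> simp [h, PiLp.add_apply]
  map_smul' c y := by ext i; by_cases h : (i : ℕ) < N <;> simp [h, PiLp.smul_apply]

lemma Elin_castLE (y : EuclideanSpace ℝ (Fin N)) (i : Fin N) :
    Elin N y (Fin.castLE (by omega) i) = y i := by
  simp [Elin, Fin.castLE, i.isLt]

lemma Elin_zero (y : EuclideanSpace ℝ (Fin N)) {i : Fin (2*N)} (hi : ¬ (i : ℕ) < N) :
    Elin N y i = 0 := by simp [Elin, hi]

lemma Elin_inj : Function.Injective (Elin N) := by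
  intro y z h
  ext i
  have h2 : Elin N y (Fin.castLE (by omega) i) = Elin N z (Fin.castLE (by omega) i) := by rw [h]
  rwa [Elin_castLE, Elin_castLE] at h2

lemma sum_split {g : Fin (2*N) → ℝ} (hg : ∀ i : Fin (2*N), ¬ (i : ℕ) < N → g i = 0) :
    ∑ i, g i = ∑ i : Fin N, g (Fin.castLE (by omega) i) := by
  have h1 : ∑ i ∈ Finset.univ.map (Fin.castLEEmb (by omega : N ≤ 2*N)), g i
      = ∑ i : Fin N, g (Fin.castLE (by omega) i) := by
    rw [Finset.sum_map]
    rfl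
  rw [← h1]
  apply (Finset.sum_subset (Finset.subset_univ _) ?_).symm
  intro x _ hx
  apply hg
  intro hlt
  apply hx
  rw [Finset.mem_map]
  exact ⟨⟨x, hlt⟩, Finset.mem_univ _, rfl⟩

variable (T : Matrix (Fin N) (Fin N) ℝ) (G : Matrix (Fin (2*N)) (Fin (2*N)) ℝ)

lemma inner_Elin (y : EuclideanSpace ℝ (Fin N)) :
    @inner ℝ (EuclideanSpace ℝ (Fin (2*N))) _ (Elin N y) (Elin N y)
      = @inner ℝ (EuclideanSpace ℝ (Fin N)) _ y y := by
  rw [inner_euc, inner_euc]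
  rw [sum_split (g := fun i => Elin N y i * Elin N y i)
    (fun i hi => by simp [Elin_zero y hi])]
  apply Finset.sum_congr rfl
  intro i _
  rw [Elin_castLE]

lemma quad_Elin (hsub : ∀ i j : Fin N,
      G (Fin.castLE (by omega) i) (Fin.castLE (by omega) j) = T i j)
    (y : EuclideanSpace ℝ (Fin N)) :
    @inner ℝ (EuclideanSpace ℝ (Fin (2*N))) _ (Elin N y) (WithLp.toLp 2 (G *ᵥ Elin N y))
      = @inner ℝ (EuclideanSpace ℝ (Fin N)) _ y (WithLp.toLp 2 (T *ᵥ y)) := by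
  rw [inner_euc, inner_euc]
  rw [sum_split (g := fun i => Elin N y i * (G *ᵥ Elin N y : Fin (2*N) → ℝ) i)
    (fun i hi => by simp [Elin_zero y hi])]
  apply Finset.sum_congr rfl
  intro i _
  rw [Elin_castLE]
  congr 1
  show (G *ᵥ Elin N y) (Fin.castLE (by omega) i) = (T *ᵥ y) i
  unfold mulVec dotProduct
  rw [sum_split (g := fun j => G (Fin.castLE (by omega) i) j * Elin N y j)
    (fun j hj => by simp [Elin_zero y hj])]
  apply Finset.sum_congr rfl
  intro j _
  rw [Elin_castLE, hsub]

end embedding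

section transfer

variable {N : ℕ} {T : Matrix (Fin N) (Fin N) ℝ} (hT : T.IsHermitian)
  {G : Matrix (Fin (2*N)) (Fin (2*N)) ℝ} (hG : G.IsHermitian)

lemma count_gt_transfer (hsub : ∀ i j : Fin N,
      G (Fin.castLE (by omega) i) (Fin.castLE (by omega) j) = T i j) (c : ℝ) :
    (Finset.univ.filter (fun k => c < hT.eigenvalues k)).card
      ≤ (Finset.univ.filter (fun j => c < hG.eigenvalues j)).card := by
  set P := Finset.univ.filter (fun k => c < hT.eigenvalues k) with hP
  set V := Submodule.span ℝ (hT.eigenvectorBasis '' ↑P) with hVdef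
  set W := V.map (Elin N) with hW
  have hrk : Module.finrank ℝ W = P.card := by
    rw [← finrank_span_eigen hT P]
    exact (LinearEquiv.finrank_eq (Submodule.equivMapOfInjective (Elin N) Elin_inj V)).symm
  rw [← hrk]
  apply count_ge_of_quad_gt hG c W
  intro x hx hx0
  obtain ⟨y, hy, rfl⟩ := Submodule.mem_map.mp hx
  have hy0 : y ≠ 0 := by rintro rfl; exact hx0 (map_zero _)
  have hq := quad_gt hT c hy hy0
  rw [quad_Elin T G hsub y]
  have hnorm : ‖Elin N y‖^2 = ‖y‖^2 := by
    rw [← real_inner_self_eq_norm_sq, ← real_inner_self_eq_norm_sq, inner_Elin]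
  rw [hnorm]
  exact hq

lemma count_lt_transfer (hsub : ∀ i j : Fin N,
      G (Fin.castLE (by omega) i) (Fin.castLE (by omega) j) = T i j) (c : ℝ) :
    (Finset.univ.filter (fun k => hT.eigenvalues k < c)).card
      ≤ (Finset.univ.filter (fun j => hG.eigenvalues j < c)).card := by
  set P := Finset.univ.filter (fun k => hT.eigenvalues k < c) with hP
  set V := Submodule.span ℝ (hT.eigenvectorBasis '' ↑P) with hVdef
  set W := V.map (Elin N) with hW
  have hrk : Module.finrank ℝ W = P.card := by
    rw [← finrank_span_eigen hT P]
    exact (LinearEquiv.finrank_eq (Submodule.equivMapOfInjective (Elin N) Elin_inj V)).symm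
  rw [← hrk]
  apply count_le_of_quad_lt hG c W
  intro x hx hx0
  obtain ⟨y, hy, rfl⟩ := Submodule.mem_map.mp hx
  have hy0 : y ≠ 0 := by rintro rfl; exact hx0 (map_zero _)
  have hq := quad_lt hT c hy hy0
  rw [quad_Elin T G hsub y]
  have hnorm : ‖Elin N y‖^2 = ‖y‖^2 := by
    rw [← real_inner_self_eq_norm_sq, ← real_inner_self_eq_norm_sq, inner_Elin]
  rw [hnorm]
  exact hq

lemma count_abs {m : ℕ} (lam : Fin m → ℝ) {c : ℝ} (hc : 0 ≤ c) :
    (Finset.univ.filter (fun k => c < |lam k|)).card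
      = (Finset.univ.filter (fun k => c < lam k)).card
        + (Finset.univ.filter (fun k => lam k < -c)).card := by
  classical
  have heq : Finset.univ.filter (fun k => c < |lam k|)
      = Finset.univ.filter (fun k => c < lam k) ∪ Finset.univ.filter (fun k => lam k < -c) := by
    ext k
    simp only [Finset.mem_filter, Finset.mem_union, Finset.mem_univ, true_and]
    rw [lt_abs]
    constructor
    · rintro (h | h)
      · exact Or.inl h
      · exact Or.inr (by linarith)
    · rintro (h | h)
      · exact Or.inl h
      · exact Or.inr (by linarith)
  rw [heq]
  apply Finset.card_union_of_disjoint
  rw [Finset.disjoint_left]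
  intro k h1 h2
  simp only [Finset.mem_filter, Finset.mem_univ, true_and] at h1 h2
  linarith

lemma count_abs_transfer (hsub : ∀ i j : Fin N,
      G (Fin.castLE (by omega) i) (Fin.castLE (by omega) j) = T i j) {c : ℝ} (hc : 0 ≤ c) :
    (Finset.univ.filter (fun k => c < |hT.eigenvalues k|)).card
      ≤ (Finset.univ.filter (fun j => c < |hG.eigenvalues j|)).card := by
  rw [count_abs _ hc, count_abs _ hc]
  exact Nat.add_le_add (count_gt_transfer hT hG hsub c) (count_lt_transfer hT hG hsub (-c))


end transfer

lemma card_filter_perm {n : ℕ} (σ : Equiv.Perm (Fin n)) (p : Fin n → Prop) [DecidablePred p] :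
    (Finset.univ.filter (fun i => p (σ i))).card = (Finset.univ.filter p).card := by
  classical
  rw [← Fintype.card_subtype, ← Fintype.card_subtype]
  exact Fintype.card_congr (σ.subtypeEquiv (fun i => Iff.rfl))

lemma sorted_sum_le {N : ℕ} (a : Fin N → ℝ) (b : Fin (2*N) → ℝ)
    (ha : ∀ k, 0 ≤ a k) (hb : ∀ j, 0 ≤ b j)
    (hcount : ∀ c, 0 ≤ c →
      (Finset.univ.filter (fun k => c < a k)).card
        ≤ (Finset.univ.filter (fun j => c < b j)).card)
    (f : ℝ → ℝ) (hf0 : ∀ x, 0 ≤ f x) (hfmono : MonotoneOn f (Set.Ici 0)) :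
    ∑ k, f (a k) ≤ ∑ j, f (b j) := by
  classical
  set σ := Tuple.sort a with hσ
  set τ := Tuple.sort b with hτ
  have hamono : Monotone (a ∘ σ) := Tuple.monotone_sort a
  have hbmono : Monotone (b ∘ τ) := Tuple.monotone_sort b
  have key : ∀ k : Fin N, a (σ k) ≤ b (τ ⟨k + N, by omega⟩) := by
    intro k
    by_contra hcon
    push_neg at hcon
    set c := b (τ ⟨k + N, by omega⟩) with hc
    have hc0 : 0 ≤ c := hb _
    have hA : N - (k : ℕ) ≤ (Finset.univ.filter (fun i => c < a i)).card := by
      rw [← card_filter_perm σ]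
      have hsub : Finset.Ici k ⊆ Finset.univ.filter (fun i => c < a (σ i)) := by
        intro i hi
        rw [Finset.mem_Ici] at hi
        rw [Finset.mem_filter]
        exact ⟨Finset.mem_univ _, lt_of_lt_of_le hcon (hamono hi)⟩
      calc N - (k : ℕ) = (Finset.Ici k).card := (Fin.card_Ici k).symm
        _ ≤ _ := Finset.card_le_card hsub
    have hB : (Finset.univ.filter (fun j => c < b j)).card ≤ N - (k : ℕ) - 1 := by
      rw [← card_filter_perm τ]
      have hsub : Finset.univ.filter (fun j => c < b (τ j))
          ⊆ Finset.Ioi (⟨k + N, by omega⟩ : Fin (2*N)) := by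
        intro j hj
        rw [Finset.mem_filter] at hj
        rw [Finset.mem_Ioi]
        by_contra hle
        push_neg at hle
        exact absurd (hbmono hle) (not_le.mpr hj.2)
      calc (Finset.univ.filter (fun j => c < b (τ j))).card
            ≤ (Finset.Ioi (⟨k + N, by omega⟩ : Fin (2*N))).card := Finset.card_le_card hsub
        _ = 2*N - 1 - (k + N) := Fin.card_Ioi _
        _ = N - (k : ℕ) - 1 := by omega
    have := hcount c hc0
    have hk := k.isLt
    omega
  calc ∑ k, f (a k) = ∑ k, f (a (σ k)) := (Equiv.sum_comp σ (fun k => f (a k))).symm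
    _ ≤ ∑ k : Fin N, f (b (τ ⟨k + N, by omega⟩)) := by
        apply Finset.sum_le_sum
        intro k _
        exact hfmono (Set.mem_Ici.mpr (ha _)) (Set.mem_Ici.mpr (hb _)) (key k)
    _ = ∑ j ∈ Finset.univ.map ⟨fun k : Fin N => (⟨k + N, by omega⟩ : Fin (2*N)),
          by intro x y hxy; simpa [Fin.ext_iff] using hxy⟩, f (b (τ j)) := by
        rw [Finset.sum_map]
        rfl
    _ ≤ ∑ j : Fin (2*N), f (b (τ j)) :=
        Finset.sum_le_sum_of_subset_of_nonneg (Finset.subset_univ _)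
          (fun j _ _ => hf0 _)
    _ = ∑ j, f (b j) := Equiv.sum_comp τ (fun j => f (b j))

lemma esd_integral {n : ℕ} {A : Matrix (Fin n) (Fin n) ℝ} (hA : A.IsHermitian)
    (g : ℝ → ℝ) :
    ∫ t, g t ∂(esd hA) = (n : ℝ)⁻¹ * ∑ i, g (hA.eigenvalues i) := by
  unfold esd
  rw [integral_smul_measure]
  rw [integral_finset_sum_measure (fun i _ =>
    (integrable_const (g (hA.eigenvalues i))).congr (ae_eq_dirac g).symm)]
  simp only [integral_dirac]
  rw [ENNReal.toReal_inv, smul_eq_mul]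
  norm_num

end EsdBound

/-- If the symmetric matrix `T` is the top-left `N × N` principal submatrix of the
symmetric `2N × 2N` matrix `G`, then for every bounded non-decreasing
`f : [0,∞) → [0,∞)` one has `∫ f(|t|) dμ_T ≤ 2 ∫ f(|t|) dμ_G`, where `μ_A` denotes the
empirical spectral distribution. -/
theorem esd_integral_submatrix_bound
    (N : ℕ) (hN : 1 ≤ N)
    (T : Matrix (Fin N) (Fin N) ℝ) (hT : T.IsHermitian)
    (G : Matrix (Fin (2 * N)) (Fin (2 * N)) ℝ) (hG : G.IsHermitian)
    (hsub : ∀ i j : Fin N,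
      G (Fin.castLE (by omega) i) (Fin.castLE (by omega) j) = T i j)
    (f : ℝ → ℝ) (hf0 : ∀ x, 0 ≤ f x) (hfmono : MonotoneOn f (Set.Ici 0))
    (hfbdd : ∃ B : ℝ, ∀ x, f x ≤ B) :
    ∫ t, f |t| ∂(esd hT) ≤ 2 * ∫ t, f |t| ∂(esd hG) := by
  rw [EsdBound.esd_integral hT (fun t => f |t|), EsdBound.esd_integral hG (fun t => f |t|)]
  have hsum : ∑ k, f (|hT.eigenvalues k|) ≤ ∑ j, f (|hG.eigenvalues j|) := by
    apply EsdBound.sorted_sum_le (fun k => |hT.eigenvalues k|) (fun j => |hG.eigenvalues j|)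
      (fun k => abs_nonneg _) (fun j => abs_nonneg _)
      (fun c hc => EsdBound.count_abs_transfer hT hG hsub hc) f hf0 hfmono
  have hNpos : (0 : ℝ) < N := by exact_mod_cast hN
  have h2N : ((2 * N : ℕ) : ℝ) = 2 * (N : ℝ) := by push_cast; ring
  rw [h2N]
  have hcoef : 2 * ((2 * (N : ℝ))⁻¹ * ∑ j, f (|hG.eigenvalues j|))
      = (N : ℝ)⁻¹ * ∑ j, f (|hG.eigenvalues j|) := by
    field_simp
  rw [hcoef]
  apply mul_le_mul_of_nonneg_left hsum (by positivity)
end
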